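/- Let $\rho : \mathbb{R} \to [0,\infty)$ be the constant density $\rho = \mathbf{1}_{[0,N)}$ for an integer $N \ge 1$, and let $\mathbb{P}$ be the one-dimensional floating crystal state $\mathbb{P} = \mathrm{Sym}\int_0^1 \delta_s \otimes \delta_{1+s} \otimes \cdots \otimes \delta_{N-1+s}\,ds$. Then the one-particle density of $\mathbb{P}$ equals $\mathbf{1}_{[0,N)}$, and for any even measurable function $w : \mathbb{R} \to [0,\infty]$ the interaction energy of $\mathbb{P}$ equals $\sum_{1 \le j < k \le N} w(k - j) = \sum_{m=1}^{N-1} (N-m)\, w(m)$. -/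

import Mathlib

open MeasureTheory
open scoped ENNReal

noncomputable section

/-- The 1D floating Wigner crystal: the symmetrization of
`∫₀¹ δ_s ⊗ δ_{1+s} ⊗ ⋯ ⊗ δ_{N-1+s} ds`. -/
def floatP (N : ℕ) : Measure (Fin N → ℝ) :=
  (Nat.factorial N : ℝ≥0∞)⁻¹ • ∑ σ : Equiv.Perm (Fin N),
    (volume.restrict (Set.Ioc (0 : ℝ) 1)).map (fun s => fun j => ((σ j : ℕ) : ℝ) + s)

lemma mapFinsetSum {α β : Type*} [MeasurableSpace α] [MeasurableSpace β] {ι : Type*}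
    (s : Finset ι) (μ : ι → Measure α) {f : α → β} (hf : Measurable f) :
    Measure.map f (∑ i ∈ s, μ i) = ∑ i ∈ s, (μ i).map f := by
  induction s using Finset.cons_induction with
  | empty => simp [Measure.map_zero]
  | cons i s hi ih => simp [Finset.sum_cons, Measure.map_add _ _ hf, ih]

lemma rangeSumRestrict (m : ℕ) :
    ∑ i ∈ Finset.range m, volume.restrict (Set.Ioc (i : ℝ) ((i : ℝ) + 1))
      = volume.restrict (Set.Ioc (0 : ℝ) (m : ℝ)) := by
  induction m with
  | zero => simp
  | succ m ih =>
    rw [Finset.sum_range_succ, ih,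
      ← Measure.restrict_union (Set.Ioc_disjoint_Ioc_of_le le_rfl) measurableSet_Ioc,
      Set.Ioc_union_Ioc_eq_Ioc (by positivity) (by push_cast; linarith)]
    push_cast
    ring_nf

lemma mapTranslate (c : ℝ) :
    (volume.restrict (Set.Ioc (0 : ℝ) 1)).map (fun s => c + s)
      = volume.restrict (Set.Ioc c (c + 1)) := by
  have h := Measure.restrict_map (μ := (volume : Measure ℝ))
    (f := fun s => c + s) (measurable_const_add c) (s := Set.Ioc c (c+1)) measurableSet_Ioc
  rw [map_add_left_eq_self] at h
  have hpre : (fun s => c + s) ⁻¹' Set.Ioc c (c+1) = Set.Ioc (0:ℝ) 1 := by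
    rw [Set.preimage_const_add_Ioc]; simp
  rw [hpre] at h
  exact h.symm

lemma part1 (n : ℕ) :
    (floatP (n+1)).map (fun X => X 0)
      = ((n+1 : ℕ) : ℝ≥0∞)⁻¹ • volume.restrict (Set.Ico (0 : ℝ) ((n+1 : ℕ) : ℝ)) := by
  have hmeas : ∀ σ : Equiv.Perm (Fin (n+1)),
      Measurable (fun s : ℝ => fun j : Fin (n+1) => ((σ j : ℕ) : ℝ) + s) :=
    fun σ => measurable_pi_lambda _ (fun j => measurable_const.add measurable_id)
  have hσ : ∀ σ : Equiv.Perm (Fin (n+1)),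
      (((volume.restrict (Set.Ioc (0:ℝ) 1)).map
          (fun s => fun j => ((σ j : ℕ) : ℝ) + s)).map (fun X : Fin (n+1) → ℝ => X 0))
        = volume.restrict (Set.Ioc ((σ 0 : ℕ) : ℝ) (((σ 0 : ℕ) : ℝ) + 1)) := by
    intro σ
    rw [Measure.map_map (measurable_pi_apply 0) (hmeas σ)]
    exact mapTranslate _
  rw [floatP, Measure.map_smul, mapFinsetSum _ _ (measurable_pi_apply 0)]
  have hs : ∑ σ : Equiv.Perm (Fin (n+1)),
      (((volume.restrict (Set.Ioc (0:ℝ) 1)).map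
          (fun s => fun j => ((σ j : ℕ) : ℝ) + s)).map (fun X : Fin (n+1) → ℝ => X 0))
      = Nat.factorial n • ∑ p : Fin (n+1),
          volume.restrict (Set.Ioc ((p : ℕ) : ℝ) (((p : ℕ) : ℝ) + 1)) := by
    simp_rw [hσ]
    rw [← Equiv.sum_comp (Equiv.Perm.decomposeFin.symm)
      (fun σ : Equiv.Perm (Fin (n+1)) =>
        volume.restrict (Set.Ioc ((σ 0 : ℕ) : ℝ) (((σ 0 : ℕ) : ℝ) + 1)))]
    rw [Fintype.sum_prod_type]
    simp_rw [Equiv.Perm.decomposeFin_symm_apply_zero]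
    simp [Finset.sum_const, Finset.card_univ, Fintype.card_perm, Fintype.card_fin,
      Finset.smul_sum]
  rw [hs]
  have hfin : ∑ p : Fin (n+1), volume.restrict (Set.Ioc ((p : ℕ) : ℝ) (((p : ℕ) : ℝ) + 1))
      = volume.restrict (Set.Ioc (0 : ℝ) ((n+1 : ℕ) : ℝ)) := by
    rw [Fin.sum_univ_eq_sum_range (fun i : ℕ => volume.restrict (Set.Ioc (i : ℝ) ((i : ℝ) + 1)))]
    exact rangeSumRestrict (n+1)
  rw [hfin, ← Nat.cast_smul_eq_nsmul ℝ≥0∞, smul_smul]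
  have hcoef : (Nat.factorial (n+1) : ℝ≥0∞)⁻¹ * (Nat.factorial n : ℝ≥0∞)
      = ((n+1 : ℕ) : ℝ≥0∞)⁻¹ := by
    rw [Nat.factorial_succ, Nat.cast_mul,
      ENNReal.mul_inv (Or.inl (by exact_mod_cast Nat.succ_ne_zero n))
        (Or.inr (by exact_mod_cast (Nat.factorial_ne_zero n))),
      mul_assoc, ENNReal.inv_mul_cancel (by exact_mod_cast Nat.factorial_ne_zero n)
        (ENNReal.natCast_ne_top _), mul_one]
  rw [hcoef]
  congr 1
  exact Measure.restrict_congr_set (Ioc_ae_eq_Icc.trans Ico_ae_eq_Icc.symm)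

lemma doubling {N : ℕ} (w : ℝ → ℝ≥0∞) (heven : ∀ x, w (-x) = w x) (x : Fin N → ℝ) :
    ∑ j : Fin N, ∑ k : Fin N, (if j ≠ k then w (x j - x k) else 0)
      = (∑ j : Fin N, ∑ k : Fin N, (if j < k then w (x j - x k) else 0))
        + ∑ j : Fin N, ∑ k : Fin N, (if j < k then w (x j - x k) else 0) := by
  have split : ∀ j k : Fin N, (if j ≠ k then w (x j - x k) else 0)
      = (if j < k then w (x j - x k) else 0) + (if k < j then w (x j - x k) else 0) := by
    intro j k
    rcases lt_trichotomy j k with h | h | h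
    · rw [if_pos h.ne, if_pos h, if_neg (not_lt_of_gt h), add_zero]
    · rw [if_neg (by simp [h]), if_neg (by simp [h]), if_neg (by simp [h]), add_zero]
    · rw [if_pos h.ne', if_neg (not_lt_of_gt h), if_pos h, zero_add]
  simp_rw [split, Finset.sum_add_distrib]
  congr 1
  rw [Finset.sum_comm]
  refine Finset.sum_congr rfl fun j _ => Finset.sum_congr rfl fun k _ => ?_
  by_cases h : j < k
  · rw [if_pos h, if_pos h, ← heven, neg_sub]
  · rw [if_neg h, if_neg h]

lemma permInv {N : ℕ} (w : ℝ → ℝ≥0∞) (heven : ∀ x, w (-x) = w x) (σ : Equiv.Perm (Fin N)) :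
    ∑ j : Fin N, ∑ k : Fin N, (if j < k then w (((σ j : ℕ) : ℝ) - ((σ k : ℕ) : ℝ)) else 0)
      = ∑ j : Fin N, ∑ k : Fin N, (if j < k then w (((k : ℕ) : ℝ) - ((j : ℕ) : ℝ)) else 0) := by
  set A := ∑ j : Fin N, ∑ k : Fin N,
    (if j < k then w (((σ j : ℕ) : ℝ) - ((σ k : ℕ) : ℝ)) else 0) with hA
  set B := ∑ j : Fin N, ∑ k : Fin N,
    (if j < k then w (((k : ℕ) : ℝ) - ((j : ℕ) : ℝ)) else 0) with hB
  have hBB : B = ∑ j : Fin N, ∑ k : Fin N,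
      (if j < k then w (((j : ℕ) : ℝ) - ((k : ℕ) : ℝ)) else 0) := by
    refine Finset.sum_congr rfl fun j _ => Finset.sum_congr rfl fun k _ => ?_
    by_cases h : j < k
    · rw [if_pos h, if_pos h, ← heven, neg_sub]
    · rw [if_neg h, if_neg h]
  have key : A + A = B + B := by
    have h1 := doubling w heven (fun j : Fin N => ((σ j : ℕ) : ℝ))
    have h2 := doubling w heven (fun j : Fin N => ((j : ℕ) : ℝ))
    rw [← hA] at h1
    rw [← hBB] at h2
    rw [← h1, ← h2]
    set F : Fin N → Fin N → ℝ≥0∞ := fun a b =>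
      if a ≠ b then w (((a : ℕ) : ℝ) - ((b : ℕ) : ℝ)) else 0 with hF
    have step1 : ∀ j k : Fin N,
        (if j ≠ k then w (((σ j : ℕ) : ℝ) - ((σ k : ℕ) : ℝ)) else 0) = F (σ j) (σ k) := by
      intro j k
      simp only [hF, ne_eq, EmbeddingLike.apply_eq_iff_eq]
    simp_rw [step1]
    calc ∑ j : Fin N, ∑ k : Fin N, F (σ j) (σ k)
        = ∑ j : Fin N, ∑ k : Fin N, F (σ j) k := by
          refine Finset.sum_congr rfl fun j _ => ?_
          exact Equiv.sum_comp σ (F (σ j))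
      _ = ∑ j : Fin N, ∑ k : Fin N, F j k := Equiv.sum_comp σ (fun a => ∑ k : Fin N, F a k)
      _ = ∑ j : Fin N, ∑ k : Fin N,
            (if j ≠ k then w (((j : ℕ) : ℝ) - ((k : ℕ) : ℝ)) else 0) := rfl
  have h2 : (2 : ℝ≥0∞) * A = 2 * B := by rw [two_mul, two_mul]; exact key
  calc A = (2 : ℝ≥0∞)⁻¹ * (2 * A) := by
        rw [← mul_assoc, ENNReal.inv_mul_cancel (by norm_num) ENNReal.ofNat_ne_top, one_mul]
    _ = (2 : ℝ≥0∞)⁻¹ * (2 * B) := by rw [h2]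
    _ = B := by
        rw [← mul_assoc, ENNReal.inv_mul_cancel (by norm_num) ENNReal.ofNat_ne_top, one_mul]

lemma part2 (N : ℕ) (w : ℝ → ℝ≥0∞) (hw : Measurable w) (heven : ∀ x, w (-x) = w x) :
    (∫⁻ X, ∑ j : Fin N, ∑ k : Fin N,
        (if j < k then w (X j - X k) else 0) ∂(floatP N))
      = ∑ j : Fin N, ∑ k : Fin N,
          (if j < k then w (((k : ℕ) : ℝ) - ((j : ℕ) : ℝ)) else 0) := by
  have hmeas : ∀ σ : Equiv.Perm (Fin N),
      Measurable (fun s : ℝ => fun j : Fin N => ((σ j : ℕ) : ℝ) + s) :=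
    fun σ => measurable_pi_lambda _ (fun j => measurable_const.add measurable_id)
  have hF : Measurable (fun X : Fin N → ℝ =>
      ∑ j : Fin N, ∑ k : Fin N, (if j < k then w (X j - X k) else 0)) := by
    apply Finset.measurable_sum
    intro j _
    apply Finset.measurable_sum
    intro k _
    by_cases h : j < k
    · simp only [if_pos h]
      exact hw.comp ((measurable_pi_apply j).sub (measurable_pi_apply k))
    · simp only [if_neg h]
      exact measurable_const
  rw [floatP, lintegral_smul_measure, lintegral_finset_sum_measure]
  have hterm : ∀ σ : Equiv.Perm (Fin N),
      (∫⁻ X, ∑ j : Fin N, ∑ k : Fin N, (if j < k then w (X j - X k) else 0)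
        ∂((volume.restrict (Set.Ioc (0:ℝ) 1)).map (fun s => fun j => ((σ j : ℕ) : ℝ) + s)))
      = ∑ j : Fin N, ∑ k : Fin N,
          (if j < k then w (((k : ℕ) : ℝ) - ((j : ℕ) : ℝ)) else 0) := by
    intro σ
    rw [lintegral_map hF (hmeas σ)]
    have hc : ∀ s : ℝ,
        (∑ j : Fin N, ∑ k : Fin N,
          (if j < k then w ((((σ j : ℕ) : ℝ) + s) - (((σ k : ℕ) : ℝ) + s)) else 0))
        = ∑ j : Fin N, ∑ k : Fin N,
          (if j < k then w (((σ j : ℕ) : ℝ) - ((σ k : ℕ) : ℝ)) else 0) := by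
      intro s
      refine Finset.sum_congr rfl fun j _ => Finset.sum_congr rfl fun k _ => ?_
      congr 2
      ring
    simp_rw [hc]
    rw [setLIntegral_const, Real.volume_Ioc]
    simp [permInv w heven σ]
  rw [Finset.sum_congr rfl (fun σ _ => hterm σ), Finset.sum_const, Finset.card_univ,
    Fintype.card_perm, Fintype.card_fin, nsmul_eq_mul, smul_eq_mul, ← mul_assoc,
    ENNReal.inv_mul_cancel (by exact_mod_cast Nat.factorial_ne_zero N)
      (ENNReal.natCast_ne_top _), one_mul]

lemma key3 (w : ℝ → ℝ≥0∞) (M : ℕ) :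
    ∑ j ∈ Finset.range M, ∑ k ∈ Finset.range M,
      (if j < k then w ((k : ℝ) - (j : ℝ)) else 0)
    = ∑ m ∈ Finset.Ico 1 M, ((M - m : ℕ) : ℝ≥0∞) * w ((m : ℕ) : ℝ) := by
  induction M with
  | zero => simp
  | succ M ih =>
    by_cases hM : M = 0
    · subst hM; simp
    have h1 : (1 : ℕ) ≤ M := Nat.one_le_iff_ne_zero.mpr hM
    have hrow : ∑ j ∈ Finset.range M, w ((M : ℝ) - (j : ℝ))
        = ∑ m ∈ Finset.Ico 1 (M + 1), w ((m : ℕ) : ℝ) := by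
      refine Finset.sum_nbij' (fun j => M - j) (fun m => M - m) ?_ ?_ ?_ ?_ ?_
      · intro j hj
        simp only [Finset.mem_range] at hj
        simp only [Finset.mem_Ico]
        omega
      · intro m hm
        simp only [Finset.mem_Ico] at hm
        simp only [Finset.mem_range]
        omega
      · intro j hj; simp only [Finset.mem_range] at hj; omega
      · intro m hm; simp only [Finset.mem_Ico] at hm; omega
      · intro j hj
        simp only [Finset.mem_range] at hj
        rw [Nat.cast_sub (le_of_lt hj)]
    calc ∑ j ∈ Finset.range (M+1), ∑ k ∈ Finset.range (M+1),
          (if j < k then w ((k : ℝ) - (j : ℝ)) else 0)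
        = ∑ j ∈ Finset.range M, (∑ k ∈ Finset.range M,
            (if j < k then w ((k : ℝ) - (j : ℝ)) else 0) + w ((M : ℝ) - (j : ℝ))) := by
          rw [Finset.sum_range_succ]
          have hz : ∑ k ∈ Finset.range (M+1),
              (if M < k then w ((k : ℝ) - (M : ℝ)) else 0) = 0 := by
            refine Finset.sum_eq_zero fun k hk => ?_
            simp only [Finset.mem_range] at hk
            exact if_neg (by omega)
          rw [hz, add_zero]
          refine Finset.sum_congr rfl fun j hj => ?_
          simp only [Finset.mem_range] at hj
          rw [Finset.sum_range_succ, if_pos hj]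
      _ = (∑ m ∈ Finset.Ico 1 M, ((M - m : ℕ) : ℝ≥0∞) * w ((m : ℕ) : ℝ))
            + ∑ m ∈ Finset.Ico 1 (M+1), w ((m : ℕ) : ℝ) := by
          rw [Finset.sum_add_distrib, ih, hrow]
      _ = ∑ m ∈ Finset.Ico 1 (M+1), ((M + 1 - m : ℕ) : ℝ≥0∞) * w ((m : ℕ) : ℝ) := by
          rw [Finset.sum_Ico_succ_top h1, Finset.sum_Ico_succ_top h1]
          have : ∀ m ∈ Finset.Ico 1 M,
              ((M + 1 - m : ℕ) : ℝ≥0∞) * w ((m : ℕ) : ℝ)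
              = ((M - m : ℕ) : ℝ≥0∞) * w ((m : ℕ) : ℝ) + w ((m : ℕ) : ℝ) := by
            intro m hm
            simp only [Finset.mem_Ico] at hm
            rw [show M + 1 - m = (M - m) + 1 by omega]
            push_cast
            ring
          rw [Finset.sum_congr rfl this, Finset.sum_add_distrib]
          simp [Nat.sub_self, add_assoc]

lemma part3 (N : ℕ) (w : ℝ → ℝ≥0∞) :
    (∑ j : Fin N, ∑ k : Fin N,
        (if j < k then w (((k : ℕ) : ℝ) - ((j : ℕ) : ℝ)) else 0))
      = ∑ m ∈ Finset.Ico 1 N, ((N - m : ℕ) : ℝ≥0∞) * w ((m : ℕ) : ℝ) := by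
  rw [← key3 w N]
  rw [← Fin.sum_univ_eq_sum_range (fun j : ℕ => ∑ k ∈ Finset.range N,
    (if j < k then w ((k : ℝ) - (j : ℝ)) else 0))]
  refine Finset.sum_congr rfl fun j _ => ?_
  rw [← Fin.sum_univ_eq_sum_range (fun k : ℕ =>
    (if (j : ℕ) < k then w ((k : ℝ) - ((j : ℕ) : ℝ)) else 0))]
  refine Finset.sum_congr rfl fun k _ => ?_
  simp only [Fin.lt_def]

/-- The 1D floating crystal has constant one-particle density `1_{[0,N)}` and its
interaction energy is `Σ_{j<k} w(k-j) = Σ_{m=1}^{N-1} (N-m) w(m)`. -/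
theorem stmt_10 (N : ℕ) [NeZero N] (hN : 1 ≤ N)
    (w : ℝ → ℝ≥0∞) (hw : Measurable w) (heven : ∀ x, w (-x) = w x) :
    (floatP N).map (fun X => X 0)
      = (N : ℝ≥0∞)⁻¹ • volume.restrict (Set.Ico (0 : ℝ) (N : ℝ)) ∧
    (∫⁻ X, ∑ j : Fin N, ∑ k : Fin N,
        (if j < k then w (X j - X k) else 0) ∂(floatP N))
      = ∑ j : Fin N, ∑ k : Fin N,
          (if j < k then w (((k : ℕ) : ℝ) - ((j : ℕ) : ℝ)) else 0) ∧
    (∑ j : Fin N, ∑ k : Fin N,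
        (if j < k then w (((k : ℕ) : ℝ) - ((j : ℕ) : ℝ)) else 0))
      = ∑ m ∈ Finset.Ico 1 N, ((N - m : ℕ) : ℝ≥0∞) * w ((m : ℕ) : ℝ) := by
  refine ⟨?_, part2 N w hw heven, part3 N w⟩
  obtain ⟨n, rfl⟩ : ∃ n, N = n + 1 := ⟨N - 1, by omega⟩
  exact_mod_cast part1 n
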